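/- For every n ≥ 3 and every ℓ ≥ 1 there exists a K_n-WORM colorable graph G* whose K_n-WORM feasible set equals {n-1} ∪ {k+n-3, ..., N+n-3} for some integers k ≥ ℓ+3 and N ≥ k; in particular the feasible set of G* has a gap of size at least ℓ. -/

import Mathlib

open SimpleGraph Finset

/-- A vertex coloring `c` is a `K_n`-WORM coloring of `G` if no set of `n`
pairwise adjacent vertices is monochromatic and none is rainbow. -/
def IsKnWORM {β : Type*} (G : SimpleGraph β) (n : ℕ) (c : β → ℕ) : Prop :=
  ∀ s : Finset β, G.IsNClique n s →
    (∃ u ∈ s, ∃ v ∈ s, c u ≠ c v) ∧ (∃ u ∈ s, ∃ v ∈ s, u ≠ v ∧ c u = c v)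



/-- proper ℕ-colorings -/
def PropC {α : Type} (G : SimpleGraph α) (f : α → ℕ) : Prop :=
  ∀ ⦃a b⦄, G.Adj a b → f a ≠ f b

section Myc

variable {α : Type}

def mycAdj (G : SimpleGraph α) : (α ⊕ (α ⊕ Unit)) → (α ⊕ (α ⊕ Unit)) → Prop
  | .inl u, .inl v => G.Adj u v
  | .inl u, .inr (.inl v) => G.Adj u v
  | .inr (.inl u), .inl v => G.Adj u v
  | .inr (.inl _), .inr (.inr _) => True
  | .inr (.inr _), .inr (.inl _) => True
  | _, _ => False

def Myc (G : SimpleGraph α) : SimpleGraph (α ⊕ (α ⊕ Unit)) where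
  Adj := mycAdj G
  symm := by
    constructor
    intro a b h
    rcases a with u | u | u <;> rcases b with v | v | v <;>
      simp [mycAdj] at h ⊢ <;> try exact h.symm
  loopless := by
    constructor
    intro a h
    rcases a with u | u | u <;> simp [mycAdj] at h

lemma myc_adj_inl_inl {G : SimpleGraph α} {u v : α} :
    (Myc G).Adj (.inl u) (.inl v) ↔ G.Adj u v := Iff.rfl

lemma myc_cliqueFree (G : SimpleGraph α) [DecidableEq α] (h : G.CliqueFree 3) :
    (Myc G).CliqueFree 3 := by
  intro s hs
  obtain ⟨a, b, c, hab, hac, hbc, rfl⟩ := Finset.card_eq_three.mp hs.2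
  have h1 : (Myc G).Adj a b := hs.1 (by simp) (by simp) hab
  have h2 : (Myc G).Adj a c := hs.1 (by simp) (by simp) hac
  have h3 : (Myc G).Adj b c := hs.1 (by simp) (by simp) hbc
  -- triangle-free as: no triple pairwise adjacent
  have hG : ∀ x y z : α, G.Adj x y → G.Adj x z → G.Adj y z → False := by
    intro x y z hxy hxz hyz
    have hxyne : x ≠ y := G.ne_of_adj hxy
    have hxzne : x ≠ z := G.ne_of_adj hxz
    have hyzne : y ≠ z := G.ne_of_adj hyz
    exact h {x, y, z} (SimpleGraph.is3Clique_triple_iff.mpr ⟨hxy, hxz, hyz⟩)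
  rcases a with ua | ua | ua <;> rcases b with ub | ub | ub <;> rcases c with uc | uc | uc <;>
    simp [Myc, mycAdj] at h1 h2 h3 <;>
    first
      | exact hG _ _ _ h1 h2 h3
      | exact hG _ _ _ h1 h2.symm h3
      | exact hG _ _ _ h1 h2 h3.symm
      | exact hG _ _ _ h1.symm h2 h3
      | exact G.irrefl (by assumption)

lemma myc_propBound (G : SimpleGraph α) [Fintype α] {m : ℕ}
    (h : ∀ f : α → ℕ, PropC G f → m ≤ (Set.range f).ncard) :
    ∀ f, PropC (Myc G) f → m + 1 ≤ (Set.range f).ncard := by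
  intro c hc
  set z : ℕ := c (.inr (.inr ())) with hz
  have hfin : (Set.range c).Finite := Set.finite_range c
  set g : α → ℕ := fun v => if c (.inl v) = z then c (.inr (.inl v)) else c (.inl v) with hg
  have hne : ∀ v, g v ≠ z := by
    intro v
    by_cases hv : c (.inl v) = z
    · simp only [hg, hv, if_true]
      exact hc (show (Myc G).Adj (.inr (.inl v)) (.inr (.inr ())) from trivial)
    · simpa [hg, hv] using hv
  have hmem : ∀ v, g v ∈ Set.range c := by
    intro v; by_cases hv : c (.inl v) = z <;> simp [hg, hv]
  have hprop : PropC G g := by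
    intro a b hab
    by_cases ha : c (.inl a) = z <;> by_cases hb : c (.inl b) = z
    · exact absurd (ha.trans hb.symm) (hc (show (Myc G).Adj (.inl a) (.inl b) from hab))
    · simp only [hg, ha, hb, if_true, if_false]
      exact fun hh => hc (show (Myc G).Adj (.inr (.inl a)) (.inl b) from hab) hh
    · simp only [hg, ha, hb, if_true, if_false]
      exact fun hh => (hc (show (Myc G).Adj (.inl a) (.inr (.inl b)) from hab) hh)
    · simp only [hg, ha, hb, if_false]
      exact hc (show (Myc G).Adj (.inl a) (.inl b) from hab)
  have hsub : Set.range g ⊆ (Set.range c) \ {z} := by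
    rintro x ⟨v, rfl⟩
    exact ⟨hmem v, hne v⟩
  have h1 : m ≤ (Set.range g).ncard := h g hprop
  have h2 : (Set.range g).ncard ≤ ((Set.range c) \ {z}).ncard :=
    Set.ncard_le_ncard hsub hfin.sdiff
  have h3 : ((Set.range c) \ {z}).ncard = (Set.range c).ncard - 1 :=
    Set.ncard_sdiff_singleton_of_mem ⟨_, hz.symm⟩
  have h4 : 1 ≤ (Set.range c).ncard := by
    have : z ∈ Set.range c := ⟨_, hz.symm⟩
    have := Set.ncard_pos hfin |>.mpr ⟨z, this⟩
    omega
  omega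

lemma myc_noIso (G : SimpleGraph α) [Nonempty α] (h : ∀ v, ∃ w, G.Adj v w) :
    ∀ v, ∃ w, (Myc G).Adj v w := by
  rintro (u | u | u)
  · obtain ⟨w, hw⟩ := h u; exact ⟨.inl w, hw⟩
  · exact ⟨.inr (.inr ()), trivial⟩
  · exact ⟨.inr (.inl (Classical.arbitrary α)), trivial⟩

lemma myc_connected (G : SimpleGraph α) [Nonempty α] (h : ∀ v, ∃ w, G.Adj v w) :
    (Myc G).Connected := by
  have hz : ∀ v : α ⊕ (α ⊕ Unit), (Myc G).Reachable v (.inr (.inr ())) := by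
    rintro (u | u | u)
    · obtain ⟨w, hw⟩ := h u
      have h1 : (Myc G).Adj (.inl u) (.inr (.inl w)) := hw
      have h2 : (Myc G).Adj (.inr (.inl w)) (.inr (.inr ())) := trivial
      exact (h1.reachable).trans h2.reachable
    · exact ((show (Myc G).Adj (.inr (.inl u)) (.inr (.inr ())) from trivial)).reachable
    · exact Reachable.refl _
  constructor
  intro a b
  exact (hz a).trans (hz b).symm

end Myc

-- iterated construction
abbrev TT : ℕ → Type := fun n => Nat.rec (Fin 2) (fun _ ih => ih ⊕ (ih ⊕ Unit)) n

instance instFTT : ∀ i, Fintype (TT i)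
  | 0 => inferInstanceAs (Fintype (Fin 2))
  | (i+1) => letI := instFTT i; inferInstanceAs (Fintype (TT i ⊕ (TT i ⊕ Unit)))

instance instDTT : ∀ i, DecidableEq (TT i)
  | 0 => inferInstanceAs (DecidableEq (Fin 2))
  | (i+1) => letI := instDTT i; inferInstanceAs (DecidableEq (TT i ⊕ (TT i ⊕ Unit)))

instance instNTT : ∀ i, Nonempty (TT i)
  | 0 => inferInstanceAs (Nonempty (Fin 2))
  | (i+1) => letI := instNTT i; inferInstanceAs (Nonempty (TT i ⊕ (TT i ⊕ Unit)))

def GG : ∀ i, SimpleGraph (TT i)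
  | 0 => (⊤ : SimpleGraph (Fin 2))
  | (i+1) => Myc (GG i)

lemma base_props : (⊤ : SimpleGraph (Fin 2)).CliqueFree 3 ∧
    (∀ v, ∃ w, (⊤ : SimpleGraph (Fin 2)).Adj v w) ∧
    (⊤ : SimpleGraph (Fin 2)).Connected ∧
    (∀ f, PropC (⊤ : SimpleGraph (Fin 2)) f → 2 ≤ (Set.range f).ncard) := by
  refine ⟨?_, ?_, ?_, ?_⟩
  · intro s hs
    have h2 : s.card ≤ 2 := by simpa using Finset.card_le_univ s
    have := hs.2
    omega
  · intro v
    refine ⟨v + 1, ?_⟩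
    show v ≠ v + 1
    omega
  · constructor
    intro a b
    by_cases h : a = b
    · exact h ▸ Reachable.refl _
    · exact (show (⊤ : SimpleGraph (Fin 2)).Adj a b from h).reachable
  · intro f hf
    have h01 : f 0 ≠ f 1 := hf (show (0:Fin 2) ≠ 1 by decide)
    have hsub : {f 0, f 1} ⊆ Set.range f := by
      rintro x (rfl | rfl)
      · exact ⟨0, rfl⟩
      · exact ⟨1, rfl⟩
    calc (2:ℕ) = ({f 0, f 1} : Set ℕ).ncard := (Set.ncard_pair h01).symm
      _ ≤ (Set.range f).ncard := Set.ncard_le_ncard hsub (Set.finite_range f)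

lemma GG_props : ∀ i, (GG i).CliqueFree 3 ∧ (∀ v, ∃ w, (GG i).Adj v w) ∧
    (GG i).Connected ∧ (∀ f, PropC (GG i) f → i + 2 ≤ (Set.range f).ncard)
  | 0 => base_props
  | (i+1) => by
    obtain ⟨h1, h2, h3, h4⟩ := GG_props i
    letI := instFTT i
    letI := instDTT i
    letI := instNTT i
    refine ⟨myc_cliqueFree _ h1, myc_noIso _ h2, myc_connected _ h2, ?_⟩
    have := myc_propBound (GG i) h4
    intro f hf
    have := this f hf
    omega

section PC
variable {V : Type} [Fintype V] [DecidableEq V] (G : SimpleGraph V)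

lemma ncard_range_eq_card_image {α : Type} [Fintype α] [DecidableEq α] (f : α → ℕ) :
    (Set.range f).ncard = (univ.image f).card := by
  rw [← Set.ncard_coe_finset, Finset.coe_image, Finset.coe_univ, Set.image_univ]

lemma pc_le (f : V → ℕ) : (univ.image f).card ≤ Fintype.card V := by
  calc (univ.image f).card ≤ (univ : Finset V).card := Finset.card_image_le
    _ = Fintype.card V := Finset.card_univ

lemma pc_top : ∃ f : V → ℕ, PropC G f ∧ (univ.image f).card = Fintype.card V := by
  classical
  set f : V → ℕ := fun v => ((Fintype.equivFin V) v : ℕ) with hf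
  have hinj : Function.Injective f := by
    intro a b h
    have : (Fintype.equivFin V) a = (Fintype.equivFin V) b := Fin.ext h
    exact (Fintype.equivFin V).injective this
  refine ⟨f, fun a b hab => fun h => G.ne_of_adj hab (hinj h), ?_⟩
  rw [Finset.card_image_of_injective _ hinj, Finset.card_univ]

lemma pc_split {f : V → ℕ} {t : ℕ} (hf : PropC G f) (ht : (univ.image f).card = t)
    (hlt : t < Fintype.card V) :
    ∃ f' : V → ℕ, PropC G f' ∧ (univ.image f').card = t + 1 := by
  classical
  have hninj : ¬ Function.Injective f := by
    intro hinj
    rw [Finset.card_image_of_injective _ hinj, Finset.card_univ] at ht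
    omega
  obtain ⟨a, b, hfab, hab⟩ := Function.not_injective_iff.mp hninj
  set fresh := (univ.image f).sup id + 1 with hfresh
  have hfr : fresh ∉ univ.image f := by
    intro hmem
    have := Finset.le_sup (f := id) hmem
    simp only [id] at this
    omega
  set f' := Function.update f a fresh with hf'
  refine ⟨f', ?_, ?_⟩
  · intro x y hxy hval
    by_cases hx : x = a <;> by_cases hy : y = a
    · rw [hx, hy] at hxy; exact G.irrefl hxy
    · rw [hf', hx, Function.update_self, Function.update_of_ne hy] at hval
      exact hfr (Finset.mem_image.mpr ⟨y, Finset.mem_univ y, hval.symm⟩)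
    · rw [hf', hy, Function.update_self, Function.update_of_ne hx] at hval
      exact hfr (Finset.mem_image.mpr ⟨x, Finset.mem_univ x, hval⟩)
    · rw [hf', Function.update_of_ne hx, Function.update_of_ne hy] at hval
      exact hf hxy hval
  · have himg : univ.image f' = insert fresh (univ.image f) := by
      apply Finset.ext
      intro z
      simp only [Finset.mem_image, Finset.mem_univ, true_and, Finset.mem_insert]
      constructor
      · rintro ⟨w, rfl⟩
        by_cases hw : w = a
        · left; rw [hf', hw, Function.update_self]
        · right; exact ⟨w, by rw [hf', Function.update_of_ne hw]⟩
      · rintro (rfl | ⟨w, rfl⟩)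
        · exact ⟨a, by rw [hf', Function.update_self]⟩
        · by_cases hw : w = a
          · refine ⟨b, ?_⟩
            rw [hf', Function.update_of_ne (Ne.symm hab), hw, ← hfab]
          · exact ⟨w, by rw [hf', Function.update_of_ne hw]⟩
    rw [himg, Finset.card_insert_of_notMem hfr, ht]

lemma pc_interval {t : ℕ} (h : ∃ f : V → ℕ, PropC G f ∧ (univ.image f).card = t) :
    ∀ d, t + d ≤ Fintype.card V →
      ∃ f : V → ℕ, PropC G f ∧ (univ.image f).card = t + d := by
  intro d
  induction d with
  | zero => intro _; simpa using h
  | succ d ih =>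
    intro hle
    obtain ⟨f, hf, hcard⟩ := ih (by omega)
    obtain ⟨f', hf', hcard'⟩ := pc_split G hf hcard (by omega)
    exact ⟨f', hf', by omega⟩

end PC




section Main

variable {V : Type} [Fintype V] [DecidableEq V] [Nonempty V]

abbrev Jty (n : ℕ) : Type := Fin (n-3) × Fin (n-1)
abbrev Wty (V : Type) (n : ℕ) : Type := (V × Fin (n-1)) ⊕ Jty n

def starAdj (G : SimpleGraph V) (n : ℕ) : Wty V n → Wty V n → Prop
  | .inl (u,i), .inl (v,j) => (u = v ∧ i ≠ j) ∨ G.Adj u v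
  | .inl _, .inr _ => True
  | .inr _, .inl _ => True
  | .inr a, .inr b => a ≠ b

def Gstar (G : SimpleGraph V) (n : ℕ) : SimpleGraph (Wty V n) where
  Adj := starAdj G n
  symm := by
    constructor
    rintro (⟨u,i⟩ | a) (⟨v,j⟩ | b) h <;> simp [starAdj] at h ⊢
    · rcases h with ⟨rfl, hne⟩ | h
      · exact Or.inl ⟨rfl, Ne.symm hne⟩
      · exact Or.inr h.symm
    · exact Ne.symm h
  loopless := by
    constructor
    rintro (⟨u,i⟩ | a) h <;> simp [starAdj] at h

variable (n : ℕ) [NeZero (n-1)] (c : Wty V n → ℕ)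

def mJc (x : ℕ) : ℕ := (univ.filter (fun j : Jty n => c (.inr j) = x)).card
def mLc (v : V) (x : ℕ) : ℕ :=
  (univ.filter (fun i : Fin (n-1) => c (.inl (v,i)) = x)).card

def StarC (G : SimpleGraph V) : Prop :=
  ∀ ⦃u v⦄, G.Adj u v → ∀ x,
    mJc n c x + mLc n c u x + mLc n c v x = 0 ∨
    mJc n c x + mLc n c u x + mLc n c v x = n - 1

def BU (u v : V) : Finset (Wty V n) :=
  ((univ.image fun i : Fin (n-1) => (.inl (u,i) : Wty V n)) ∪
    (univ.image fun i : Fin (n-1) => (.inl (v,i) : Wty V n))) ∪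
    (univ.image (.inr : Jty n → Wty V n))

lemma mem_BU {u v : V} {w : Wty V n} :
    w ∈ BU n u v ↔ (∃ i, w = .inl (u,i)) ∨ (∃ i, w = .inl (v,i)) ∨ (∃ j, w = .inr j) := by
  simp [BU, eq_comm, or_assoc]

lemma inr_mem_BU {u v : V} (j : Jty n) : (.inr j : Wty V n) ∈ BU n u v := by
  rw [mem_BU]; exact Or.inr (Or.inr ⟨j, rfl⟩)

lemma card_BU_filter {u v : V} (huv : u ≠ v) (x : ℕ) :
    ((BU n u v).filter (fun w => c w = x)).card
      = mJc n c x + mLc n c u x + mLc n c v x := by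
  classical
  have hinj1 : Function.Injective (fun i : Fin (n-1) => (.inl (u,i) : Wty V n)) := by
    intro a b h; simpa using h
  have hinj2 : Function.Injective (fun i : Fin (n-1) => (.inl (v,i) : Wty V n)) := by
    intro a b h; simpa using h
  have hinj3 : Function.Injective (.inr : Jty n → Wty V n) := by
    intro a b h; simpa using h
  have hd12 : Disjoint (univ.image fun i : Fin (n-1) => (.inl (u,i) : Wty V n))
      (univ.image fun i : Fin (n-1) => (.inl (v,i) : Wty V n)) := by
    simp only [Finset.disjoint_left, mem_image]
    rintro w ⟨i, -, rfl⟩ ⟨j, -, h⟩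
    simp only [Sum.inl.injEq, Prod.mk.injEq] at h
    exact huv h.1.symm
  have hd3 : Disjoint ((univ.image fun i : Fin (n-1) => (.inl (u,i) : Wty V n)) ∪
      (univ.image fun i : Fin (n-1) => (.inl (v,i) : Wty V n)))
      (univ.image (.inr : Jty n → Wty V n)) := by
    simp only [Finset.disjoint_left, mem_union, mem_image]
    rintro w (⟨i, -, rfl⟩ | ⟨i, -, rfl⟩) ⟨j, -, h⟩ <;> simp at h
  have hd3' : Disjoint
      (((univ.image fun i : Fin (n-1) => (.inl (u,i) : Wty V n)).filter (fun w => c w = x)) ∪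
        ((univ.image fun i : Fin (n-1) => (.inl (v,i) : Wty V n)).filter (fun w => c w = x)))
      ((univ.image (.inr : Jty n → Wty V n)).filter (fun w => c w = x)) :=
    hd3.mono (Finset.union_subset_union (filter_subset _ _) (filter_subset _ _))
      (filter_subset _ _)
  have hd12' : Disjoint
      ((univ.image fun i : Fin (n-1) => (.inl (u,i) : Wty V n)).filter (fun w => c w = x))
      ((univ.image fun i : Fin (n-1) => (.inl (v,i) : Wty V n)).filter (fun w => c w = x)) :=
    hd12.mono (filter_subset _ _) (filter_subset _ _)
  rw [BU, filter_union, filter_union]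
  rw [card_union_of_disjoint hd3', card_union_of_disjoint hd12']
  rw [filter_image, filter_image, filter_image,
      card_image_of_injective _ hinj1, card_image_of_injective _ hinj2,
      card_image_of_injective _ hinj3]
  simp only [mJc, mLc]
  ring

lemma card_BU {u v : V} (huv : u ≠ v) :
    (BU n u v).card = (n-3) * (n-1) + (n-1) + (n-1) := by
  classical
  have := card_BU_filter (V := V) n (fun _ => 0) huv 0
  simpa [mJc, mLc, Finset.filter_true_of_mem, Fintype.card_fin] using this

lemma isClique_BU {G : SimpleGraph V} {u v : V} (huv : G.Adj u v) :
    (Gstar G n).IsClique (BU n u v : Finset (Wty V n)) := by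
  intro a ha b hb hne
  rw [Finset.mem_coe, mem_BU] at ha hb
  show starAdj G n a b
  rcases ha with ⟨i, rfl⟩ | ⟨i, rfl⟩ | ⟨j, rfl⟩ <;>
    rcases hb with ⟨i', rfl⟩ | ⟨i', rfl⟩ | ⟨j', rfl⟩
  · exact Or.inl ⟨rfl, fun h => hne (by rw [h])⟩
  · exact Or.inr huv
  · trivial
  · exact Or.inr huv.symm
  · exact Or.inl ⟨rfl, fun h => hne (by rw [h])⟩
  · trivial
  · trivial
  · trivial
  · exact fun h => hne (by rw [h])

lemma gstar_adj_inl_inl {G : SimpleGraph V} {n : ℕ} {u v : V} {i j : Fin (n-1)} :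
    (Gstar G n).Adj (.inl (u,i)) (.inl (v,j)) ↔ (u = v ∧ i ≠ j) ∨ G.Adj u v := Iff.rfl

lemma clique_in_BU {G : SimpleGraph V} (hcf : G.CliqueFree 3)
    (hNbr : ∀ v : V, ∃ w, G.Adj v w)
    {s : Finset (Wty V n)} (hs : (Gstar G n).IsNClique n s) :
    ∃ u v, G.Adj u v ∧ s ⊆ BU n u v := by
  classical
  by_cases hAB : ∃ (a b : V) (i j : Fin (n-1)),
      (.inl (a,i) : Wty V n) ∈ s ∧ (.inl (b,j) : Wty V n) ∈ s ∧ a ≠ b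
  · obtain ⟨a, b, i, j, ha, hb, hab⟩ := hAB
    have hadj : G.Adj a b := by
      have := hs.1 ha hb (by simp [hab])
      rw [gstar_adj_inl_inl] at this
      rcases this with ⟨h, -⟩ | h
      · exact absurd h hab
      · exact h
    refine ⟨a, b, hadj, fun w hw => ?_⟩
    rw [mem_BU]
    rcases w with ⟨d, i'⟩ | j'
    · by_cases hda : d = a
      · exact Or.inl ⟨i', by rw [hda]⟩
      by_cases hdb : d = b
      · exact Or.inr (Or.inl ⟨i', by rw [hdb]⟩)
      exfalso
      have hda' : G.Adj d a := by
        have := hs.1 hw ha (by simp [hda])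
        rw [gstar_adj_inl_inl] at this
        rcases this with ⟨h, -⟩ | h
        · exact absurd h hda
        · exact h
      have hdb' : G.Adj d b := by
        have := hs.1 hw hb (by simp [hdb])
        rw [gstar_adj_inl_inl] at this
        rcases this with ⟨h, -⟩ | h
        · exact absurd h hdb
        · exact h
      exact hcf {d, a, b} (SimpleGraph.is3Clique_triple_iff.mpr ⟨hda', hdb', hadj⟩)
    · exact Or.inr (Or.inr ⟨j', rfl⟩)
  · push_neg at hAB
    by_cases h1 : ∃ (a : V) (i : Fin (n-1)), (.inl (a,i) : Wty V n) ∈ s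
    · obtain ⟨a, i, ha⟩ := h1
      obtain ⟨b, hb⟩ := hNbr a
      refine ⟨a, b, hb, fun w hw => ?_⟩
      rw [mem_BU]
      rcases w with ⟨d, i'⟩ | j'
      · exact Or.inl ⟨i', by rw [hAB d a i' i hw ha]⟩
      · exact Or.inr (Or.inr ⟨j', rfl⟩)
    · push_neg at h1
      obtain ⟨a, ha⟩ := Classical.exists_true_of_nonempty (α := V) ‹_›
      obtain ⟨b, hb⟩ := hNbr a
      refine ⟨a, b, hb, fun w hw => ?_⟩
      rw [mem_BU]
      rcases w with ⟨d, i'⟩ | j'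
      · exact absurd hw (h1 d i')
      · exact Or.inr (Or.inr ⟨j', rfl⟩)

lemma card_image_BU {G : SimpleGraph V} {u v : V} (hn : 3 ≤ n)
    (h : StarC n c G) (hadj : G.Adj u v) :
    ((BU n u v).image c).card = n - 1 := by
  classical
  have huv := G.ne_of_adj hadj
  have hsum : (BU n u v).card = ∑ x ∈ (BU n u v).image c,
      ((BU n u v).filter (fun w => c w = x)).card :=
    Finset.card_eq_sum_card_image c _
  have heach : ∀ x ∈ (BU n u v).image c,
      ((BU n u v).filter (fun w => c w = x)).card = n - 1 := by
    intro x hx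
    rw [card_BU_filter n c huv x]
    rcases h hadj x with h0 | h0
    · exfalso
      obtain ⟨w, hw, hcw⟩ := Finset.mem_image.mp hx
      have : 1 ≤ ((BU n u v).filter (fun w => c w = x)).card :=
        Finset.card_pos.mpr ⟨w, Finset.mem_filter.mpr ⟨hw, hcw⟩⟩
      rw [card_BU_filter n c huv x] at this
      omega
    · exact h0
  rw [Finset.sum_congr rfl heach, Finset.sum_const, smul_eq_mul, card_BU n huv] at hsum
  have hfac : (n-3) * (n-1) + (n-1) + (n-1) = (n-1) * (n-1) := by
    have h2 : n - 3 + 2 = n - 1 := by omega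
    calc (n-3) * (n-1) + (n-1) + (n-1) = (n - 3 + 2) * (n-1) := by ring
      _ = (n-1) * (n-1) := by rw [h2]
  rw [hfac] at hsum
  exact Nat.eq_of_mul_eq_mul_right (by omega) hsum.symm

lemma worm_iff {G : SimpleGraph V} (hn : 3 ≤ n) (hcf : G.CliqueFree 3)
    (hNbr : ∀ v : V, ∃ w, G.Adj v w) :
    IsKnWORM (Gstar G n) n c ↔ StarC n c G := by
  classical
  constructor
  · intro hw u v hadj x
    have huv := G.ne_of_adj hadj
    set t := (BU n u v).image c with ht
    -- each class at most n-1
    have hcls : ∀ y, ((BU n u v).filter (fun w => c w = y)).card ≤ n - 1 := by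
      intro y
      by_contra hbig
      push_neg at hbig
      have hbig' : n ≤ ((BU n u v).filter (fun w => c w = y)).card := by omega
      obtain ⟨s, hssub, hscard⟩ := Finset.exists_subset_card_eq hbig'
      have hclique : (Gstar G n).IsNClique n s :=
        ⟨(isClique_BU n hadj).subset (by
          exact_mod_cast Finset.coe_subset.mpr (hssub.trans (filter_subset _ _))), hscard⟩
      obtain ⟨⟨a, ha, b, hb, hne⟩, -⟩ := hw s hclique
      have hca := (Finset.mem_filter.mp (hssub ha)).2
      have hcb := (Finset.mem_filter.mp (hssub hb)).2
      exact hne (hca.trans hcb.symm)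
    -- at most n-1 colors
    have htcard : t.card ≤ n - 1 := by
      by_contra hbig
      push_neg at hbig
      have hbig' : n ≤ t.card := by omega
      obtain ⟨t', ht'sub, ht'card⟩ := Finset.exists_subset_card_eq hbig'
      have hW : Nonempty (Wty V n) :=
        ⟨.inl (Classical.arbitrary V, ⟨0, by omega⟩)⟩
      set g : ℕ → Wty V n := fun y =>
        if hy : ∃ w ∈ BU n u v, c w = y then hy.choose else Classical.arbitrary _ with hg
      have hgspec : ∀ y ∈ t', g y ∈ BU n u v ∧ c (g y) = y := by
        intro y hy
        have : ∃ w ∈ BU n u v, c w = y := by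
          obtain ⟨w, hw', hcw⟩ := Finset.mem_image.mp (ht'sub hy)
          exact ⟨w, hw', hcw⟩
        simp only [hg, dif_pos this]
        exact ⟨this.choose_spec.1, this.choose_spec.2⟩
      set s := t'.image g with hs
      have hscard : s.card = n := by
        rw [hs, Finset.card_image_of_injOn, ht'card]
        intro y hy y' hy' hgy
        rw [← (hgspec y hy).2, ← (hgspec y' hy').2, hgy]
      have hclique : (Gstar G n).IsNClique n s := by
        refine ⟨(isClique_BU n hadj).subset ?_, hscard⟩
        intro w hw'
        obtain ⟨y, hy, rfl⟩ := Finset.mem_image.mp hw'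
        exact (hgspec y hy).1
      obtain ⟨-, ⟨a, ha, b, hb, hne, hcab⟩⟩ := hw s hclique
      obtain ⟨y, hy, rfl⟩ := Finset.mem_image.mp ha
      obtain ⟨y', hy', rfl⟩ := Finset.mem_image.mp hb
      rw [(hgspec y hy).2, (hgspec y' hy').2] at hcab
      exact hne (by rw [hcab])
    -- forced equality
    by_cases hxt : x ∈ t
    · right
      rw [← card_BU_filter n c huv x]
      by_contra hlt
      have hle := hcls x
      have hlt' : ((BU n u v).filter (fun w => c w = x)).card < n - 1 := by omega
      have hsum : (BU n u v).card = ∑ y ∈ t, ((BU n u v).filter (fun w => c w = y)).card :=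
        Finset.card_eq_sum_card_image c _
      have hstrict : ∑ y ∈ t, ((BU n u v).filter (fun w => c w = y)).card
          < ∑ _y ∈ t, (n-1) :=
        Finset.sum_lt_sum (fun y _ => hcls y) ⟨x, hxt, hlt'⟩
      rw [Finset.sum_const, smul_eq_mul] at hstrict
      have hub : t.card * (n-1) ≤ (n-1) * (n-1) :=
        Nat.mul_le_mul_right _ htcard
      have hcardBU := card_BU (n := n) huv
      have hfac : (n-3) * (n-1) + (n-1) + (n-1) = (n-1) * (n-1) := by
        have h2 : n - 3 + 2 = n - 1 := by omega
        calc (n-3) * (n-1) + (n-1) + (n-1) = (n - 3 + 2) * (n-1) := by ring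
          _ = (n-1) * (n-1) := by rw [h2]
      omega
    · left
      rw [← card_BU_filter n c huv x]
      by_contra h0
      have : 1 ≤ ((BU n u v).filter (fun w => c w = x)).card := by omega
      obtain ⟨w, hw'⟩ := Finset.card_pos.mp this
      have := Finset.mem_filter.mp hw'
      exact hxt (Finset.mem_image.mpr ⟨w, this.1, this.2⟩)
  · intro h s hs
    obtain ⟨u, v, hadj, hsub⟩ := clique_in_BU n hcf hNbr hs
    have huv := G.ne_of_adj hadj
    constructor
    · by_contra hmono
      push_neg at hmono
      have hs0 : s.Nonempty := by
        rw [← Finset.card_pos, hs.2]; omega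
      obtain ⟨w0, hw0⟩ := hs0
      set x := c w0 with hx
      have hall : ∀ w ∈ s, c w = x := fun w hw => (hmono w0 hw0 w hw).symm
      have hsubf : s ⊆ (BU n u v).filter (fun w => c w = x) := fun w hw =>
        Finset.mem_filter.mpr ⟨hsub hw, hall w hw⟩
      have hle := Finset.card_le_card hsubf
      rw [hs.2, card_BU_filter n c huv x] at hle
      rcases h hadj x with h0 | h0 <;> omega
    · by_contra hrb
      push_neg at hrb
      have hinj : Set.InjOn c s := by
        intro a ha b hb hcab
        by_contra hne
        exact (hrb a ha b hb hne) hcab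
      have hcard : (s.image c).card = n := by
        rw [Finset.card_image_of_injOn hinj, hs.2]
      have hsubim : s.image c ⊆ (BU n u v).image c := Finset.image_subset_image hsub
      have := Finset.card_le_card hsubim
      rw [hcard, card_image_BU n c hn h hadj] at this
      omega


def fc (v : V) : ℕ := c (.inl (v, 0))

def MonoL (v : V) : Prop := ∀ i, c (.inl (v,i)) = fc n c v

lemma mLc_le (v : V) (x : ℕ) : mLc n c v x ≤ n - 1 := by
  simpa [mLc] using Finset.card_filter_le univ (fun i : Fin (n-1) => c (.inl (v,i)) = x)

lemma mLc_eq_iff (v : V) (x : ℕ) :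
    mLc n c v x = n - 1 ↔ ∀ i, c (.inl (v,i)) = x := by
  constructor
  · intro h i
    have : (univ.filter (fun i : Fin (n-1) => c (.inl (v,i)) = x)) = univ := by
      apply Finset.eq_univ_of_card
      rw [Fintype.card_fin]; exact h
    have := Finset.mem_filter.mp (this ▸ Finset.mem_univ i)
    exact this.2
  · intro h
    simp [mLc, Finset.filter_true_of_mem (fun i _ => h i), Fintype.card_fin]

lemma mLc_pos_iff (v : V) (x : ℕ) :
    1 ≤ mLc n c v x ↔ ∃ i, c (.inl (v,i)) = x := by
  rw [mLc, Nat.one_le_iff_ne_zero, ← Nat.pos_iff_ne_zero, Finset.card_pos]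
  constructor
  · rintro ⟨i, hi⟩
    exact ⟨i, (Finset.mem_filter.mp hi).2⟩
  · rintro ⟨i, hi⟩
    exact ⟨i, Finset.mem_filter.mpr ⟨Finset.mem_univ i, hi⟩⟩

lemma mono_mLc {v : V} (h : MonoL n c v) (x : ℕ) :
    mLc n c v x = if x = fc n c v then n - 1 else 0 := by
  by_cases hx : x = fc n c v
  · rw [if_pos hx, mLc_eq_iff]
    intro i
    rw [h i, hx]
  · rw [if_neg hx, mLc]
    rw [Finset.card_eq_zero]
    apply Finset.filter_false_of_mem
    intro i _
    rw [h i]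
    exact fun hh => hx hh.symm

lemma not_mono_mLc {v : V} (h : ¬ MonoL n c v) (x : ℕ) :
    mLc n c v x ≤ n - 2 := by
  have hle := mLc_le n c v x
  rcases Nat.lt_or_ge (mLc n c v x) (n-1) with hlt | hge
  · have h1 : 1 ≤ n - 1 := Nat.one_le_iff_ne_zero.mpr (NeZero.ne _)
    omega
  · exfalso
    have : mLc n c v x = n - 1 := le_antisymm hle hge
    rw [mLc_eq_iff] at this
    exact h (fun i => (this i).trans (this 0).symm)

lemma mLc_fc_pos (v : V) : 1 ≤ mLc n c v (fc n c v) :=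
  (mLc_pos_iff n c v _).mpr ⟨0, rfl⟩

lemma sum_mLc (v : V) :
    ∑ x ∈ univ.image (fun i : Fin (n-1) => c (.inl (v,i))), mLc n c v x = n - 1 := by
  have := Finset.card_eq_sum_card_image (fun i : Fin (n-1) => c (.inl (v,i))) univ
  simpa [Fintype.card_fin, mLc] using this.symm

lemma mJc_pos_iff (x : ℕ) : 1 ≤ mJc n c x ↔ ∃ j, c (.inr j) = x := by
  rw [mJc, Nat.one_le_iff_ne_zero, ← Nat.pos_iff_ne_zero, Finset.card_pos]
  constructor
  · rintro ⟨j, hj⟩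
    exact ⟨j, (Finset.mem_filter.mp hj).2⟩
  · rintro ⟨j, hj⟩
    exact ⟨j, Finset.mem_filter.mpr ⟨Finset.mem_univ j, hj⟩⟩

lemma sum_mJc :
    ∑ x ∈ univ.image (fun j : Jty n => c (.inr j)), mJc n c x = (n-3) * (n-1) := by
  have := Finset.card_eq_sum_card_image (fun j : Jty n => c (.inr j)) univ
  simpa [mJc] using this.symm

lemma mem_image_univ_c (x : ℕ) :
    x ∈ (univ : Finset (Wty V n)).image c ↔
      (∃ (v : V) (i : Fin (n-1)), c (.inl (v,i)) = x) ∨ (∃ j : Jty n, c (.inr j) = x) := by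
  simp only [Finset.mem_image, Finset.mem_univ, true_and]
  constructor
  · rintro ⟨(⟨v,i⟩ | j), rfl⟩
    · exact Or.inl ⟨v, i, rfl⟩
    · exact Or.inr ⟨j, rfl⟩
  · rintro (⟨v, i, rfl⟩ | ⟨j, rfl⟩)
    · exact ⟨.inl (v,i), rfl⟩
    · exact ⟨.inr j, rfl⟩

section Classify
variable {G : SimpleGraph V}

lemma closure_all (hconn : G.Connected) (S : Set V) {v0 : V} (h0 : v0 ∈ S)
    (hcl : ∀ ⦃a b⦄, G.Adj a b → a ∈ S → b ∈ S) : ∀ v, v ∈ S := by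
  have aux : ∀ (a b : V) (p : G.Walk a b), a ∈ S → b ∈ S := by
    intro a b p
    induction p with
    | nil => exact fun h => h
    | cons hadj _ ih => exact fun h => ih (hcl hadj h)
  intro v
  obtain ⟨p⟩ := hconn.preconnected v0 v
  exact aux _ _ p h0

lemma mJc_le_aux (hEdge : ∃ a b, G.Adj a b) (h : StarC n c G) (x : ℕ) :
    mJc n c x ≤ n - 1 := by
  obtain ⟨a, b, hab⟩ := hEdge
  rcases h hab x with h0 | h0 <;> omega

/-- the forced non-mono profile -/
noncomputable def nuP (x : ℕ) : ℕ := if 1 ≤ mJc n c x then n - 1 - mJc n c x else 0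

lemma q1 (h : StarC n c G) {u v : V} (hadj : G.Adj u v)
    (hu : ¬ MonoL n c u) (hv : MonoL n c v) : ∀ x, mLc n c u x = nuP n c x := by
  intro x
  have h1 : 1 ≤ n - 1 := Nat.one_le_iff_ne_zero.mpr (NeZero.ne _)
  have hnm := not_mono_mLc n c hu x
  have hvm := mono_mLc n c hv x
  by_cases hxd : x = fc n c v
  · rw [if_pos hxd] at hvm
    have hs := h hadj x
    rw [hvm] at hs
    have : mJc n c x = 0 ∧ mLc n c u x = 0 := by omega
    rw [nuP, if_neg (by omega), this.2]
  · rw [if_neg hxd] at hvm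
    have hs := h hadj x
    rw [hvm] at hs
    by_cases hj : 1 ≤ mJc n c x + mLc n c u x
    · rcases hs with h0 | h0
      · omega
      · rw [nuP]
        by_cases hj1 : 1 ≤ mJc n c x
        · rw [if_pos hj1]; omega
        · rw [if_neg hj1]; omega
    · rw [nuP, if_neg (by omega)]; omega

lemma q2 (h : StarC n c G) (hEdge : ∃ a b, G.Adj a b) {u w : V} (hadj : G.Adj u w)
    (hu : ∀ x, mLc n c u x = nuP n c x) : MonoL n c w := by
  have h1 : 1 ≤ n - 1 := Nat.one_le_iff_ne_zero.mpr (NeZero.ne _)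
  have hkey : ∀ x, mLc n c w x = 0 ∨ mLc n c w x = n - 1 := by
    intro x
    have hs := h hadj x
    rw [hu x, nuP] at hs
    have hJle := mJc_le_aux n c hEdge h x
    by_cases hj : 1 ≤ mJc n c x
    · rw [if_pos hj] at hs; omega
    · rw [if_neg hj] at hs; omega
  have := mLc_fc_pos n c w
  rcases hkey (fc n c w) with h0 | h0
  · omega
  · rw [mLc_eq_iff] at h0
    exact h0

lemma nuP_pos {u : V} (hu : ∀ x, mLc n c u x = nuP n c x) :
    ∃ x, 1 ≤ mJc n c x ∧ mJc n c x ≤ n - 2 := by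
  have h1 : 1 ≤ n - 1 := Nat.one_le_iff_ne_zero.mpr (NeZero.ne _)
  have := mLc_fc_pos n c u
  rw [hu _] at this
  rw [nuP] at this
  by_cases hj : 1 ≤ mJc n c (fc n c u)
  · rw [if_pos hj] at this
    exact ⟨fc n c u, hj, by omega⟩
  · rw [if_neg hj] at this; omega

lemma caseB2 (hconn : G.Connected) (hEdge : ∃ a b, G.Adj a b)
    (hNS : ∀ f, PropC G f → 3 ≤ (Set.range f).ncard)
    (h : StarC n c G) {u0 v1 : V} (hu0 : ¬ MonoL n c u0) (hv1 : MonoL n c v1) :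
    False := by
  classical
  have h1 : 1 ≤ n - 1 := Nat.one_le_iff_ne_zero.mpr (NeZero.ne _)
  -- find a mixed edge
  have hmix : ∃ a b, G.Adj a b ∧ ¬ MonoL n c a ∧ MonoL n c b := by
    by_contra hno
    push_neg at hno
    have : ∀ v, v ∈ {v : V | ¬ MonoL n c v} :=
      closure_all hconn _ hu0 (fun a b hab ha => hno a b hab ha)
    exact this v1 hv1
  obtain ⟨a, b, hab, hA, hB⟩ := hmix
  have hνa : ∀ x, mLc n c a x = nuP n c x := q1 n c h hab hA hB
  obtain ⟨x0, hx01, hx02⟩ := nuP_pos n c hνa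
  -- every vertex is mono or has profile ν
  have hallS : ∀ v, v ∈ {w : V | MonoL n c w ∨ ∀ x, mLc n c w x = nuP n c x} := by
    apply closure_all hconn _ (Or.inr hνa)
    rintro p q hpq (hp | hp)
    · by_cases hq : MonoL n c q
      · exact Or.inl hq
      · exact Or.inr (q1 n c h hpq.symm hq hp)
    · exact Or.inl (q2 n c h hEdge hpq hp)
  by_cases hmm : ∃ p q, G.Adj p q ∧ MonoL n c p ∧ MonoL n c q
  · obtain ⟨p, q, hpq, hp, hq⟩ := hmm
    have hs := h hpq x0
    have hP := mono_mLc n c hp x0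
    have hQ := mono_mLc n c hq x0
    have hP' : mLc n c p x0 = n - 1 ∨ mLc n c p x0 = 0 := by
      rw [hP]; split <;> simp
    have hQ' : mLc n c q x0 = n - 1 ∨ mLc n c q x0 = 0 := by
      rw [hQ]; split <;> simp
    omega
  · -- 2-colorable contradiction
    set f2 : V → ℕ := fun w => if MonoL n c w then 0 else 1 with hf2
    have hprop : PropC G f2 := by
      intro p q hpq
      by_cases hp : MonoL n c p <;> by_cases hq : MonoL n c q
      · exact absurd ⟨p, q, hpq, hp, hq⟩ hmm
      · simp [hf2, hp, hq]
      · simp [hf2, hp, hq]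
      · exfalso
        have hpS := hallS p
        rcases hpS with h' | h'
        · exact hp h'
        · exact hq (q2 n c h hEdge hpq h')
    have h3 := hNS f2 hprop
    have hsub : Set.range f2 ⊆ {0, 1} := by
      rintro x ⟨w, rfl⟩
      by_cases hw : MonoL n c w <;> simp [hf2, hw]
    have hle : (Set.range f2).ncard ≤ ({0, 1} : Set ℕ).ncard :=
      Set.ncard_le_ncard hsub (Set.toFinite _)
    rw [Set.ncard_pair (by norm_num)] at hle
    omega

lemma mJc_fc_zero (hNbr : ∀ v : V, ∃ w, G.Adj v w) (h : StarC n c G)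
    {v : V} (hv : MonoL n c v) : mJc n c (fc n c v) = 0 := by
  obtain ⟨w, hw⟩ := hNbr v
  have hs := h hw (fc n c v)
  have hP := mono_mLc n c hv (fc n c v)
  rw [if_pos rfl] at hP
  have h1 : 1 ≤ n - 1 := Nat.one_le_iff_ne_zero.mpr (NeZero.ne _)
  omega

lemma caseA (hNbr : ∀ v : V, ∃ w, G.Adj v w) (hEdge : ∃ a b, G.Adj a b)
    (h : StarC n c G) (hmono : ∀ v, MonoL n c v) :
    PropC G (fc n c) ∧
      ((univ : Finset (Wty V n)).image c).card
        = (univ.image (fc n c)).card + (n-3) := by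
  classical
  have h1 : 1 ≤ n - 1 := Nat.one_le_iff_ne_zero.mpr (NeZero.ne _)
  have hprop : PropC G (fc n c) := by
    intro u v huv hfeq
    have hs := h huv (fc n c u)
    have hP := mono_mLc n c (hmono u) (fc n c u)
    rw [if_pos rfl] at hP
    have hQ := mono_mLc n c (hmono v) (fc n c u)
    rw [if_pos hfeq] at hQ
    omega
  refine ⟨hprop, ?_⟩
  set A := univ.image (fc n c) with hA
  set B := univ.image (fun j : Jty n => c (.inr j)) with hB
  have hBeach : ∀ x ∈ B, mJc n c x = n - 1 := by
    intro x hx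
    obtain ⟨j, -, hj⟩ := Finset.mem_image.mp hx
    have hpos : 1 ≤ mJc n c x := (mJc_pos_iff n c x).mpr ⟨j, hj⟩
    obtain ⟨a, b, hab⟩ := hEdge
    have hs := h hab x
    have hPa := mono_mLc n c (hmono a) x
    have hPb := mono_mLc n c (hmono b) x
    have hxa : x ≠ fc n c a := by
      rintro rfl
      rw [mJc_fc_zero n c hNbr h (hmono a)] at hpos
      omega
    have hxb : x ≠ fc n c b := by
      rintro rfl
      rw [mJc_fc_zero n c hNbr h (hmono b)] at hpos
      omega
    rw [if_neg hxa] at hPa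
    rw [if_neg hxb] at hPb
    omega
  have hBcard : B.card = n - 3 := by
    have hsum := sum_mJc n c
    rw [← hB] at hsum
    rw [Finset.sum_congr rfl hBeach, Finset.sum_const, smul_eq_mul] at hsum
    exact Nat.eq_of_mul_eq_mul_right (by omega) hsum
  have hdisj : Disjoint A B := by
    rw [Finset.disjoint_left]
    intro x hxA hxB
    obtain ⟨v, -, hv⟩ := Finset.mem_image.mp hxA
    have := mJc_fc_zero n c hNbr h (hmono v)
    rw [hv] at this
    obtain ⟨j, -, hj⟩ := Finset.mem_image.mp hxB
    have := (mJc_pos_iff n c x).mpr ⟨j, hj⟩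
    omega
  have hrng : (univ : Finset (Wty V n)).image c = A ∪ B := by
    apply Finset.ext
    intro x
    rw [mem_image_univ_c, Finset.mem_union]
    constructor
    · rintro (⟨v, i, hvi⟩ | ⟨j, hj⟩)
      · left
        rw [hA, Finset.mem_image]
        exact ⟨v, Finset.mem_univ v, by rw [← (hmono v i), hvi]⟩
      · right
        rw [hB, Finset.mem_image]
        exact ⟨j, Finset.mem_univ j, hj⟩
    · rintro (hx | hx)
      · obtain ⟨v, -, hv⟩ := Finset.mem_image.mp hx
        exact Or.inl ⟨v, 0, hv⟩
      · obtain ⟨j, -, hj⟩ := Finset.mem_image.mp hx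
        exact Or.inr ⟨j, hj⟩
  rw [hrng, Finset.card_union_of_disjoint hdisj, hBcard]

noncomputable def FmP (m : ℕ → ℕ) (x : ℕ) : ℕ :=
  if 1 ≤ mJc n c x + m x then n - 1 - (mJc n c x + m x) else 0

lemma stepL1 (h : StarC n c G) {a b : V} (hab : G.Adj a b) (hb : ¬ MonoL n c b) :
    ∀ x, mLc n c b x = FmP n c (mLc n c a) x := by
  intro x
  have h1 : 1 ≤ n - 1 := Nat.one_le_iff_ne_zero.mpr (NeZero.ne _)
  have hnm := not_mono_mLc n c hb x
  have hs := h hab x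
  rw [FmP]
  by_cases hj : 1 ≤ mJc n c x + mLc n c a x
  · rw [if_pos hj]; omega
  · rw [if_neg hj]; omega

lemma caseB1 (hconn : G.Connected) (hNbr : ∀ v : V, ∃ w, G.Adj v w)
    (hNS : ∀ f, PropC G f → 3 ≤ (Set.range f).ncard)
    (h : StarC n c G) (hall : ∀ v, ¬ MonoL n c v) :
    ∀ v w x, mLc n c v x = mLc n c w x := by
  classical
  obtain ⟨u1⟩ := (inferInstance : Nonempty V)
  obtain ⟨v1, hu1v1⟩ := hNbr u1
  set μ : ℕ → ℕ := mLc n c u1 with hμ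
  set μ' : ℕ → ℕ := mLc n c v1 with hμ'
  have hstep : ∀ ⦃a b : V⦄, G.Adj a b → ∀ x, mLc n c b x = FmP n c (mLc n c a) x :=
    fun a b hab => stepL1 n c h hab (hall b)
  have hFμ : ∀ x, FmP n c μ x = μ' x := fun x => (hstep hu1v1 x).symm
  have hFμ' : ∀ x, FmP n c μ' x = μ x := fun x => (hstep hu1v1.symm x).symm
  have hcongr : ∀ (m m' : ℕ → ℕ), (∀ x, m x = m' x) → ∀ x, FmP n c m x = FmP n c m' x := by
    intro m m' hmm x
    rw [FmP, FmP, hmm x]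
  have hallS : ∀ w, w ∈ {w : V | (∀ x, mLc n c w x = μ x) ∨ (∀ x, mLc n c w x = μ' x)} := by
    apply closure_all hconn _ (Or.inl (fun x => rfl))
    rintro p q hpq (hp | hp)
    · right
      intro x
      rw [hstep hpq x, hcongr _ _ hp x, hFμ x]
    · left
      intro x
      rw [hstep hpq x, hcongr _ _ hp x, hFμ' x]
  by_cases hμμ : ∀ x, μ x = μ' x
  · have hall' : ∀ w x, mLc n c w x = μ x := by
      intro w x
      rcases hallS w with h' | h'
      · exact h' x
      · rw [h' x, hμμ x]
    intro v w x
    rw [hall' v x, hall' w x]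
  · exfalso
    set f2 : V → ℕ := fun w => if ∀ x, mLc n c w x = μ x then 0 else 1 with hf2
    have hprop : PropC G f2 := by
      intro p q hpq
      have hq' : ∀ x, mLc n c q x = FmP n c (mLc n c p) x := hstep hpq
      rcases hallS p with hp | hp
      · have hqq : ∀ x, mLc n c q x = μ' x := by
          intro x
          rw [hq' x, hcongr _ _ hp x, hFμ x]
        have hqne : ¬ (∀ x, mLc n c q x = μ x) := by
          intro hcon
          exact hμμ (fun x => by rw [← hcon x, hqq x])
        simp [hf2, if_pos hp, if_neg hqne]
      · have hqq : ∀ x, mLc n c q x = μ x := by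
          intro x
          rw [hq' x, hcongr _ _ hp x, hFμ' x]
        have hpne : ¬ (∀ x, mLc n c p x = μ x) := by
          intro hcon
          exact hμμ (fun x => by rw [← hcon x, hp x])
        simp [hf2, if_neg hpne, if_pos hqq]
    have h3 := hNS f2 hprop
    have hsub : Set.range f2 ⊆ {0, 1} := by
      rintro x ⟨w, rfl⟩
      by_cases hw : ∀ x, mLc n c w x = μ x <;> simp [hf2, hw]
    have hle : (Set.range f2).ncard ≤ ({0, 1} : Set ℕ).ncard :=
      Set.ncard_le_ncard hsub (Set.toFinite _)
    rw [Set.ncard_pair (by norm_num)] at hle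
    omega

theorem classifyStar (hn : 3 ≤ n) (hconn : G.Connected) (hNbr : ∀ v : V, ∃ w, G.Adj v w)
    (hEdge : ∃ a b, G.Adj a b)
    (hNS : ∀ f, PropC G f → 3 ≤ (Set.range f).ncard)
    (h : StarC n c G) :
    ((univ : Finset (Wty V n)).image c).card = n - 1 ∨
    ∃ f : V → ℕ, PropC G f ∧
      ((univ : Finset (Wty V n)).image c).card = (univ.image f).card + (n-3) := by
  classical
  by_cases hmono : ∀ v, MonoL n c v
  · right
    obtain ⟨hp, hcard⟩ := caseA n c hNbr hEdge h hmono
    exact ⟨fc n c, hp, hcard⟩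
  · left
    push_neg at hmono
    obtain ⟨u0, hu0⟩ := hmono
    have hall : ∀ v, ¬ MonoL n c v := by
      intro v hv
      exact caseB2 n c hconn hEdge hNS h hu0 hv
    have halleq := caseB1 n c hconn hNbr hNS h hall
    obtain ⟨a, b, hab⟩ := hEdge
    have hcard := card_image_BU n c hn h hab
    have hrng : (univ : Finset (Wty V n)).image c = (BU n a b).image c := by
      apply Finset.Subset.antisymm
      · intro x hx
        rw [mem_image_univ_c] at hx
        rcases hx with ⟨v, i, hvi⟩ | ⟨j, hj⟩
        · have hpos : 1 ≤ mLc n c a x := by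
            rw [halleq a v x, mLc_pos_iff]
            exact ⟨i, hvi⟩
          obtain ⟨i', hi'⟩ := (mLc_pos_iff n c a x).mp hpos
          exact Finset.mem_image.mpr ⟨.inl (a, i'), (mem_BU n).mpr (Or.inl ⟨i', rfl⟩), hi'⟩
        · exact Finset.mem_image.mpr ⟨.inr j, (mem_BU n).mpr (Or.inr (Or.inr ⟨j, rfl⟩)), hj⟩
      · exact Finset.image_subset_image (Finset.subset_univ _)
    rw [hrng, hcard]

end Classify

section Constructions

lemma filter_snd_eq {a b : ℕ} (q : Fin b → Prop) [DecidablePred q] :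
    (univ : Finset (Fin a × Fin b)).filter (fun j => q j.2)
      = (univ : Finset (Fin a)) ×ˢ ((univ : Finset (Fin b)).filter q) := by
  apply Finset.ext
  intro j
  simp [Finset.mem_product]

lemma card_filter_snd {a b : ℕ} (q : Fin b → Prop) [DecidablePred q] :
    ((univ : Finset (Fin a × Fin b)).filter (fun j => q j.2)).card
      = a * (univ.filter q).card := by
  rw [filter_snd_eq, Finset.card_product, Finset.card_univ, Fintype.card_fin]

lemma filter_fst_eq {a b : ℕ} (q : Fin a → Prop) [DecidablePred q] :
    (univ : Finset (Fin a × Fin b)).filter (fun j => q j.1)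
      = ((univ : Finset (Fin a)).filter q) ×ˢ (univ : Finset (Fin b)) := by
  apply Finset.ext
  intro j
  simp [Finset.mem_product]

lemma card_filter_fst {a b : ℕ} (q : Fin a → Prop) [DecidablePred q] :
    ((univ : Finset (Fin a × Fin b)).filter (fun j => q j.1)).card
      = (univ.filter q).card * b := by
  rw [filter_fst_eq, Finset.card_product, Finset.card_univ, Fintype.card_fin]

lemma card_filter_val_eq {q x : ℕ} :
    ((univ : Finset (Fin q)).filter (fun i : Fin q => (i:ℕ) = x)).card
      = if x < q then 1 else 0 := by
  by_cases hx : x < q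
  · rw [if_pos hx]
    have h2 : (univ : Finset (Fin q)).filter (fun i : Fin q => (i:ℕ) = x) = {⟨x, hx⟩} := by
      apply Finset.ext
      intro i
      simp only [Finset.mem_filter, Finset.mem_univ, true_and, Finset.mem_singleton]
      constructor
      · intro h; exact Fin.ext h
      · intro h; rw [h]
    rw [h2, Finset.card_singleton]
  · rw [if_neg hx]
    rw [Finset.card_eq_zero]
    apply Finset.filter_false_of_mem
    intro i _
    exact fun h => hx (h ▸ i.isLt)

def c0 : Wty V n → ℕ := fun w => match w with
  | .inl (_, i) => (i : ℕ)
  | .inr j => (j.2 : ℕ)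

variable {G : SimpleGraph V}

lemma mJc_c0 (x : ℕ) : mJc n (c0 (V := V) n) x = (n-3) * (if x < n-1 then 1 else 0) := by
  have h : mJc n (c0 (V := V) n) x
      = ((univ : Finset (Jty n)).filter (fun j : Jty n => ((j.2 : ℕ) = x))).card := rfl
  rw [h, card_filter_snd (fun i : Fin (n-1) => (i:ℕ) = x), card_filter_val_eq]

lemma mLc_c0 (v : V) (x : ℕ) : mLc n (c0 (V := V) n) v x = if x < n-1 then 1 else 0 := by
  have h : mLc n (c0 (V := V) n) v x
      = ((univ : Finset (Fin (n-1))).filter (fun i : Fin (n-1) => (i:ℕ) = x)).card := rfl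
  rw [h, card_filter_val_eq]

lemma star_c0 (hn : 3 ≤ n) : StarC n (c0 (V := V) n) G := by
  intro u v _ x
  rw [mJc_c0, mLc_c0, mLc_c0]
  by_cases hx : x < n-1
  · right; rw [if_pos hx]; omega
  · left; rw [if_neg hx]; omega

lemma card_image_c0 (hn : 3 ≤ n) :
    ((univ : Finset (Wty V n)).image (c0 (V := V) n)).card = n - 1 := by
  have h : (univ : Finset (Wty V n)).image (c0 (V := V) n) = Finset.range (n-1) := by
    apply Finset.ext
    intro x
    rw [mem_image_univ_c, Finset.mem_range]
    constructor
    · rintro (⟨v, i, rfl⟩ | ⟨j, rfl⟩)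
      · exact i.isLt
      · exact j.2.isLt
    · intro hx
      exact Or.inl ⟨Classical.arbitrary V, ⟨x, hx⟩, rfl⟩
  rw [h, Finset.card_range]

def c1 (f : V → ℕ) : Wty V n → ℕ := fun w => match w with
  | .inl (v, _) => 2 * f v
  | .inr j => 2 * (j.1 : ℕ) + 1

lemma mLc_c1 (f : V → ℕ) (v : V) (x : ℕ) :
    mLc n (c1 (V := V) n f) v x = if 2 * f v = x then n-1 else 0 := by
  have h : mLc n (c1 (V := V) n f) v x
      = ((univ : Finset (Fin (n-1))).filter (fun _ : Fin (n-1) => 2 * f v = x)).card := rfl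
  rw [h, Finset.filter_const]
  split <;> simp [Fintype.card_fin]

lemma mJc_c1 (f : V → ℕ) (x : ℕ) :
    mJc n (c1 (V := V) n f) x
      = ((univ : Finset (Fin (n-3))).filter (fun a : Fin (n-3) => 2 * (a:ℕ) + 1 = x)).card
          * (n-1) := by
  have h : mJc n (c1 (V := V) n f) x
      = ((univ : Finset (Jty n)).filter (fun j : Jty n => 2 * (j.1 : ℕ) + 1 = x)).card := rfl
  rw [h, card_filter_fst (fun a : Fin (n-3) => 2 * (a:ℕ) + 1 = x)]

lemma card_odd_filter_le (x : ℕ) :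
    ((univ : Finset (Fin (n-3))).filter (fun a : Fin (n-3) => 2 * (a:ℕ) + 1 = x)).card ≤ 1 := by
  apply Finset.card_le_one.mpr
  intro a ha b hb
  have h1 := (Finset.mem_filter.mp ha).2
  have h2 := (Finset.mem_filter.mp hb).2
  apply Fin.ext
  omega

lemma star_c1 (hn : 3 ≤ n) {f : V → ℕ} (hf : PropC G f) :
    StarC n (c1 (V := V) n f) G := by
  intro u v hadj x
  rw [mJc_c1, mLc_c1, mLc_c1]
  have hodd := card_odd_filter_le n x
  have hfuv : f u ≠ f v := hf hadj
  by_cases h1 : 2 * f u = x <;> by_cases h2 : 2 * f v = x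
  · exfalso; exact hfuv (by omega)
  · rw [if_pos h1, if_neg h2]
    have h0 : ((univ : Finset (Fin (n-3))).filter
        (fun a : Fin (n-3) => 2 * (a:ℕ) + 1 = x)).card = 0 := by
      rw [Finset.card_eq_zero]
      apply Finset.filter_false_of_mem
      intro a _
      omega
    rw [h0]
    right; omega
  · rw [if_neg h1, if_pos h2]
    have h0 : ((univ : Finset (Fin (n-3))).filter
        (fun a : Fin (n-3) => 2 * (a:ℕ) + 1 = x)).card = 0 := by
      rw [Finset.card_eq_zero]
      apply Finset.filter_false_of_mem
      intro a _
      omega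
    rw [h0]
    right; omega
  · rw [if_neg h1, if_neg h2]
    rcases Nat.le_one_iff_eq_zero_or_eq_one.mp hodd with h0 | h0 <;> rw [h0]
    · left; omega
    · right; omega

lemma card_image_c1 (hn : 3 ≤ n) (f : V → ℕ) :
    ((univ : Finset (Wty V n)).image (c1 (V := V) n f)).card
      = (univ.image f).card + (n-3) := by
  classical
  set A := (univ.image f).image (fun y => 2 * y) with hA
  set B := (univ : Finset (Fin (n-3))).image (fun a : Fin (n-3) => 2 * (a:ℕ) + 1) with hB
  have hrng : (univ : Finset (Wty V n)).image (c1 (V := V) n f) = A ∪ B := by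
    apply Finset.ext
    intro x
    rw [mem_image_univ_c, Finset.mem_union]
    constructor
    · rintro (⟨v, i, rfl⟩ | ⟨j, rfl⟩)
      · left
        rw [hA, Finset.image_image, Finset.mem_image]
        exact ⟨v, Finset.mem_univ v, rfl⟩
      · right
        rw [hB, Finset.mem_image]
        exact ⟨j.1, Finset.mem_univ _, rfl⟩
    · rintro (hx | hx)
      · rw [hA, Finset.image_image, Finset.mem_image] at hx
        obtain ⟨v, -, rfl⟩ := hx
        exact Or.inl ⟨v, 0, rfl⟩
      · rw [hB, Finset.mem_image] at hx
        obtain ⟨a, -, rfl⟩ := hx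
        exact Or.inr ⟨(a, 0), rfl⟩
  have hdisj : Disjoint A B := by
    rw [Finset.disjoint_left]
    intro x hxA hxB
    rw [hA, Finset.mem_image] at hxA
    rw [hB, Finset.mem_image] at hxB
    obtain ⟨y, -, rfl⟩ := hxA
    obtain ⟨a, -, ha⟩ := hxB
    have ha' : 2 * (a:ℕ) + 1 = 2 * y := ha
    omega
  have hAcard : A.card = (univ.image f).card :=
    Finset.card_image_of_injective _ (fun y z h => by
      have h' : 2 * y = 2 * z := h
      omega)
  have hBcard : B.card = n - 3 := by
    rw [hB, Finset.card_image_of_injective _ (show Function.Injective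
      (fun a : Fin (n-3) => 2 * (a:ℕ) + 1) from fun y z h => Fin.ext (by
        have h' : 2 * (y:ℕ) + 1 = 2 * (z:ℕ) + 1 := h
        omega))]
    simp
  rw [hrng, Finset.card_union_of_disjoint hdisj, hAcard, hBcard]

end Constructions


theorem wormSpectrum {G : SimpleGraph V} (hn : 3 ≤ n) (hcf : G.CliqueFree 3)
    (hconn : G.Connected) (hNbr : ∀ v : V, ∃ w, G.Adj v w) (hEdge : ∃ a b, G.Adj a b)
    (hNS : ∀ f, PropC G f → 3 ≤ (Set.range f).ncard) :
    {s | ∃ c : Wty V n → ℕ, IsKnWORM (Gstar G n) n c ∧ (Set.range c).ncard = s}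
      = {n-1} ∪ Set.Icc
          (sInf {t | ∃ f : V → ℕ, PropC G f ∧ (univ.image f).card = t} + (n-3))
          (Fintype.card V + (n-3)) := by
  classical
  set PCs := {t | ∃ f : V → ℕ, PropC G f ∧ (univ.image f).card = t} with hPCs
  have hPCne : (Fintype.card V) ∈ PCs := pc_top G
  set k := sInf PCs with hk
  have hkmem : k ∈ PCs := Nat.sInf_mem ⟨_, hPCne⟩
  have hkle : ∀ t ∈ PCs, k ≤ t := fun t ht => Nat.sInf_le ht
  ext s
  simp only [Set.mem_setOf_eq, Set.mem_union, Set.mem_singleton_iff, Set.mem_Icc]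
  constructor
  · rintro ⟨c, hw, rfl⟩
    have hstar := (worm_iff n c hn hcf hNbr).mp hw
    rw [ncard_range_eq_card_image]
    rcases classifyStar n c hn hconn hNbr hEdge hNS hstar with h1 | ⟨f, hf, heq⟩
    · left; exact h1
    · right
      have hmemt : (univ.image f).card ∈ PCs := ⟨f, hf, rfl⟩
      have h1 := hkle _ hmemt
      have h2 := pc_le (V := V) f
      rw [heq]
      exact ⟨by omega, by omega⟩
  · rintro (rfl | ⟨h1, h2⟩)
    · refine ⟨c0 (V := V) n, (worm_iff n _ hn hcf hNbr).mpr (star_c0 n hn), ?_⟩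
      rw [ncard_range_eq_card_image, card_image_c0 n hn]
    · obtain ⟨f0, hf0, hc0⟩ := hkmem
      obtain ⟨f, hf, hcard⟩ := pc_interval G ⟨f0, hf0, hc0⟩ ((s - (n-3)) - k) (by omega)
      refine ⟨c1 (V := V) n f, (worm_iff n _ hn hcf hNbr).mpr (star_c1 n hn hf), ?_⟩
      rw [ncard_range_eq_card_image, card_image_c1 n hn f, hcard]
      omega

end Main

section Transfer

lemma worm_comap_mp {α β : Type} (e : α ≃ β) (H : SimpleGraph β) (n : ℕ) (c : α → ℕ)
    (hw : IsKnWORM (H.comap ⇑e) n c) : IsKnWORM H n (c ∘ ⇑e.symm) := by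
  classical
  intro s hs
  set s' := s.image ⇑e.symm with hs'
  have hcl : (H.comap ⇑e).IsNClique n s' := by
    constructor
    · intro x hx y hy hxy
      rw [hs', Finset.coe_image] at hx hy
      obtain ⟨a, ha, rfl⟩ := hx
      obtain ⟨b, hb, rfl⟩ := hy
      have hab : a ≠ b := fun h => hxy (by rw [h])
      have hadj := hs.1 ha hb hab
      show H.Adj (e (e.symm a)) (e (e.symm b))
      simpa using hadj
    · rw [hs', Finset.card_image_of_injective _ e.symm.injective, hs.2]
  obtain ⟨⟨u, hu, v, hv, hne⟩, ⟨u', hu', v', hv', hne', heq⟩⟩ := hw s' hcl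
  obtain ⟨u0, hu0, rfl⟩ := Finset.mem_image.mp hu
  obtain ⟨v0, hv0, rfl⟩ := Finset.mem_image.mp hv
  obtain ⟨u0', hu0', rfl⟩ := Finset.mem_image.mp hu'
  obtain ⟨v0', hv0', rfl⟩ := Finset.mem_image.mp hv'
  refine ⟨⟨u0, hu0, v0, hv0, hne⟩, ⟨u0', hu0', v0', hv0', ?_, heq⟩⟩
  exact fun h => hne' (by rw [h])

lemma worm_comap_mpr {α β : Type} (e : α ≃ β) (H : SimpleGraph β) (n : ℕ) (c : β → ℕ)
    (hw : IsKnWORM H n c) : IsKnWORM (H.comap ⇑e) n (c ∘ ⇑e) := by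
  classical
  intro s hs
  set s' := s.image ⇑e with hs'
  have hcl : H.IsNClique n s' := by
    constructor
    · intro x hx y hy hxy
      rw [hs', Finset.coe_image] at hx hy
      obtain ⟨a, ha, rfl⟩ := hx
      obtain ⟨b, hb, rfl⟩ := hy
      have hab : a ≠ b := fun h => hxy (by rw [h])
      exact hs.1 ha hb hab
    · rw [hs', Finset.card_image_of_injective _ e.injective, hs.2]
  obtain ⟨⟨u, hu, v, hv, hne⟩, ⟨u', hu', v', hv', hne', heq⟩⟩ := hw s' hcl
  obtain ⟨u0, hu0, rfl⟩ := Finset.mem_image.mp hu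
  obtain ⟨v0, hv0, rfl⟩ := Finset.mem_image.mp hv
  obtain ⟨u0', hu0', rfl⟩ := Finset.mem_image.mp hu'
  obtain ⟨v0', hv0', rfl⟩ := Finset.mem_image.mp hv'
  refine ⟨⟨u0, hu0, v0, hv0, hne⟩, ⟨u0', hu0', v0', hv0', ?_, heq⟩⟩
  exact fun h => hne' (by rw [h])

lemma feas_eq {α β : Type} (e : α ≃ β) (H : SimpleGraph β) (n : ℕ) :
    {s | ∃ c : α → ℕ, IsKnWORM (H.comap ⇑e) n c ∧ (Set.range c).ncard = s}
      = {s | ∃ c : β → ℕ, IsKnWORM H n c ∧ (Set.range c).ncard = s} := by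
  ext s
  simp only [Set.mem_setOf_eq]
  constructor
  · rintro ⟨c, hw, rfl⟩
    exact ⟨c ∘ ⇑e.symm, worm_comap_mp e H n c hw,
      by rw [e.symm.surjective.range_comp c]⟩
  · rintro ⟨c, hw, rfl⟩
    exact ⟨c ∘ ⇑e, worm_comap_mpr e H n c hw,
      by rw [e.surjective.range_comp c]⟩

end Transfer

theorem stmt10 (n ℓ : ℕ) (hn : 3 ≤ n) (hℓ : 1 ≤ ℓ) :
    ∃ (m : ℕ) (G : SimpleGraph (Fin m)) (k N : ℕ), ℓ + 3 ≤ k ∧ k ≤ N ∧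
      {s | ∃ c : Fin m → ℕ, IsKnWORM G n c ∧ (Set.range c).ncard = s} =
        {n - 1} ∪ Set.Icc (k + n - 3) (N + n - 3) := by
  classical
  obtain ⟨hcf, hNbr, hconn, hNS⟩ := GG_props (ℓ+1)
  set V := TT (ℓ+1) with hV
  set G := GG (ℓ+1) with hG
  haveI : NeZero (n-1) := ⟨by omega⟩
  have hEdge : ∃ a b, G.Adj a b := by
    obtain ⟨w, hw⟩ := hNbr (Classical.arbitrary V)
    exact ⟨_, w, hw⟩
  have hNS3 : ∀ f, PropC G f → 3 ≤ (Set.range f).ncard := fun f hf => by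
    have := hNS f hf
    omega
  set PCs := {t | ∃ f : V → ℕ, PropC G f ∧ (univ.image f).card = t} with hPCs
  set k := sInf PCs with hk
  have hPCne : Fintype.card V ∈ PCs := pc_top G
  have hkmem : k ∈ PCs := Nat.sInf_mem ⟨_, hPCne⟩
  have hkl : ℓ + 3 ≤ k := by
    obtain ⟨f, hf, hc⟩ := hkmem
    have := hNS f hf
    rw [ncard_range_eq_card_image] at this
    omega
  have hkN : k ≤ Fintype.card V := by
    obtain ⟨f, hf, hc⟩ := hkmem
    have := pc_le (V := V) f
    omega
  set e := Fintype.equivFin (Wty V n) with he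
  refine ⟨Fintype.card (Wty V n), (Gstar G n).comap ⇑e.symm, k, Fintype.card V, hkl, hkN, ?_⟩
  have htrans := feas_eq e.symm (Gstar G n) n
  rw [htrans, wormSpectrum n hn hcf hconn hNbr hEdge hNS3]
  have e1 : k + n - 3 = k + (n-3) := by omega
  have e2 : Fintype.card V + n - 3 = Fintype.card V + (n-3) := by omega
  rw [e1, e2, hk, hPCs]
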